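/- Let F be a field of characteristic different from 2, (V,B) a finite-dimensional F-vector space with a nondegenerate symmetric bilinear form, and T an isometry of (V,B) whose minimal polynomial p is monic, irreducible, self-dual, and different from X − 1 and X + 1. Set E = F[X]/(p) (a field extension of F), regard V as an E-vector space via [f]·v = f(T)(v), let σ be the unique F-algebra automorphism of E with σ(t) = t⁻¹ where t is the class of X, and let h : E → F be an F-linear map such that (a,b) ↦ h(ab) is nondegenerate on E and h ∘ σ = h. Then there exists a unique map H : V × V → E such that H is additive in its first variable, H(e·u, v) = e·H(u,v) for all e ∈ E and u,v ∈ V, and h(H(u,v)) = B(u,v) for all u,v ∈ V; moreover this H satisfies H(v,u) = σ(H(u,v)) for all u,v ∈ V, so H is a σ-hermitian form on the E-vector space V. -/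

import Mathlib

/-- The group of isometries of a bilinear space `(V, B)`, as a subgroup of the
group of linear automorphisms of `V`. -/
def isometryGroup (F : Type*) [Field F] {V : Type*} [AddCommGroup V] [Module F V]
    (B : LinearMap.BilinForm F V) : Subgroup (V ≃ₗ[F] V) where
  carrier := {T | ∀ u v : V, B (T u) (T v) = B u v}
  one_mem' := by intro u v; rfl
  mul_mem' := by
    intro a b ha hb u v
    have h1 : (a * b) u = a (b u) := rfl
    have h2 : (a * b) v = a (b v) := rfl
    rw [h1, h2, ha, hb]
  inv_mem' := by
    intro a ha u v
    have h := ha (a⁻¹ u) (a⁻¹ v)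
    have h1 : a (a⁻¹ u) = u := a.apply_symm_apply u
    have h2 : a (a⁻¹ v) = v := a.apply_symm_apply v
    rw [h1, h2] at h
    exact h.symm


open Polynomial

/-- The dual of a polynomial `f` (with `f(0) ≠ 0`): `f*(X) = f(0)⁻¹ · Xⁿ · f(1/X)`,
i.e. `f(0)⁻¹` times the reverse of `f`. -/
noncomputable def dualPoly {F : Type*} [Field F] (f : Polynomial F) : Polynomial F :=
  Polynomial.C ((f.eval 0)⁻¹) * f.reverse

/-- Let `T` be an isometry of a nondegenerate symmetric bilinear space whose
minimal polynomial `p` is monic, irreducible, self-dual and different from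
`X ± 1`.  Let `E = F[X]/(p)` act on `V` via `[f] • v = f(T) v`, let `σ` be the
automorphism of `E` inverting the class of `X`, and let `h : E → F` be `F`-linear
with nondegenerate multiplication form and `h ∘ σ = h`.  Then there is a unique
`H : V × V → E`, additive and `E`-linear in the first variable, with
`h(H(u,v)) = B(u,v)`; and this `H` is `σ`-hermitian. -/
theorem exists_unique_induced_hermitian_form
    (F : Type*) [Field F] (hchar : ringChar F ≠ 2)
    (V : Type*) [AddCommGroup V] [Module F V] [FiniteDimensional F V]
    (B : LinearMap.BilinForm F V) (hsymm : B.IsSymm) (hnd : B.Nondegenerate)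
    (T : V ≃ₗ[F] V) (hT : T ∈ isometryGroup F B)
    (p : Polynomial F) (hpm : p.Monic) (hpi : Irreducible p)
    (hsd : dualPoly p = p) (hp1 : p ≠ Polynomial.X - 1) (hp2 : p ≠ Polynomial.X + 1)
    (hmin : minpoly F ((T : V →ₗ[F] V) : Module.End F V) = p)
    (σ : AdjoinRoot p ≃ₐ[F] AdjoinRoot p)
    (hσ : σ (AdjoinRoot.root p) * AdjoinRoot.root p = 1)
    (h : AdjoinRoot p →ₗ[F] F)
    (hhnd : ∀ a : AdjoinRoot p, (∀ b : AdjoinRoot p, h (a * b) = 0) → a = 0)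
    (hhσ : ∀ e : AdjoinRoot p, h (σ e) = h e) :
    (∃! H : V → V → AdjoinRoot p,
      (∀ u u' v : V, H (u + u') v = H u v + H u' v) ∧
      (∀ f : Polynomial F, ∀ u v : V,
        H ((Polynomial.aeval ((T : V →ₗ[F] V) : Module.End F V) f) u) v =
          AdjoinRoot.mk p f * H u v) ∧
      (∀ u v : V, h (H u v) = B u v)) ∧
    (∀ H : V → V → AdjoinRoot p,
      ((∀ u u' v : V, H (u + u') v = H u v + H u' v) ∧
       (∀ f : Polynomial F, ∀ u v : V,
         H ((Polynomial.aeval ((T : V →ₗ[F] V) : Module.End F V) f) u) v =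
           AdjoinRoot.mk p f * H u v) ∧
       (∀ u v : V, h (H u v) = B u v)) →
      ∀ u v : V, H v u = σ (H u v)) := by
  classical
  set A : Module.End F V := ((T : V →ₗ[F] V) : Module.End F V) with hA
  have hp0 : p ≠ 0 := hpm.ne_zero
  have hpz : Polynomial.aeval A p = 0 := by rw [← hmin]; exact minpoly.aeval F A
  -- the action of `E = AdjoinRoot p` on `V`, as a ring hom to endomorphisms
  set ρ : AdjoinRoot p →+* Module.End F V :=
    Ideal.Quotient.lift (Ideal.span {p}) (Polynomial.aeval A).toRingHom (by
      intro a ha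
      obtain ⟨q, rfl⟩ := (Ideal.mem_span_singleton).mp ha
      simp [map_mul, hpz]) with hρ
  have hρmk : ∀ f : Polynomial F, ρ (AdjoinRoot.mk p f) = Polynomial.aeval A f :=
    fun f => rfl
  have hρs : ∀ (c : F) (e : AdjoinRoot p), ρ (c • e) = c • ρ e := by
    intro c e
    rw [Algebra.smul_def, map_mul]
    have h1 : ρ (algebraMap F (AdjoinRoot p) c) = algebraMap F (Module.End F V) c := by
      have e1 : (algebraMap F (AdjoinRoot p)) c = AdjoinRoot.mk p (Polynomial.C c) := by
        rw [AdjoinRoot.algebraMap_eq]; rfl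
      rw [e1, hρmk, Polynomial.aeval_C]
    rw [h1, ← Algebra.smul_def]
  -- extensionality from nondegeneracy of the multiplication form
  have hext : ∀ a b : AdjoinRoot p,
      (∀ f : Polynomial F, h (AdjoinRoot.mk p f * a) = h (AdjoinRoot.mk p f * b)) → a = b := by
    intro a b hab
    have h1 : ∀ c : AdjoinRoot p, h ((a - b) * c) = 0 := by
      intro c
      obtain ⟨f, rfl⟩ := AdjoinRoot.mk_surjective c
      have := hab f
      rw [sub_mul, map_sub, mul_comm a, mul_comm b, this, sub_self]
    have := hhnd (a - b) h1
    exact sub_eq_zero.mp this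
  -- existence of the master form
  have master : ∃ H0 : V → V → AdjoinRoot p, ∀ (u v : V) (f : Polynomial F),
      h (AdjoinRoot.mk p f * H0 u v) = B ((Polynomial.aeval A f) u) v := by
    haveI : FiniteDimensional F (AdjoinRoot p) := (AdjoinRoot.powerBasis' hpm).finite
    set Φ : AdjoinRoot p →ₗ[F] Module.Dual F (AdjoinRoot p) :=
      (LinearMap.mul F (AdjoinRoot p)).compr₂ h with hΦ
    have hΦapp : ∀ a b : AdjoinRoot p, Φ a b = h (a * b) := fun a b => rfl
    have hinj : Function.Injective Φ := by
      rw [← LinearMap.ker_eq_bot]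
      apply LinearMap.ker_eq_bot'.mpr
      intro a ha
      exact hhnd a (fun b => by
        have := LinearMap.congr_fun ha b
        simpa [hΦapp] using this)
    have hsurj : Function.Surjective Φ :=
      (LinearMap.injective_iff_surjective_of_finrank_eq_finrank
        Subspace.dual_finrank_eq.symm).mp hinj
    set eΦ : AdjoinRoot p ≃ₗ[F] Module.Dual F (AdjoinRoot p) :=
      LinearEquiv.ofBijective Φ ⟨hinj, hsurj⟩ with heΦ
    have heΦapp : ∀ a, eΦ a = Φ a := fun a => rfl
    refine ⟨fun u v => eΦ.symm
      { toFun := fun e => B ((ρ e) u) v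
        map_add' := by intro e1 e2; simp [map_add]
        map_smul' := by intro c e; simp [hρs, map_smul] }, ?_⟩
    intro u v f
    have h1 := eΦ.apply_symm_apply
      ({ toFun := fun e => B ((ρ e) u) v
         map_add' := by intro e1 e2; simp [map_add]
         map_smul' := by intro c e; simp [hρs, map_smul] } : Module.Dual F (AdjoinRoot p))
    have h2 := LinearMap.congr_fun ((heΦapp _).symm.trans h1) (AdjoinRoot.mk p f)
    rw [hΦapp] at h2
    rw [mul_comm, h2]
    simp [hρmk]
  obtain ⟨H0, hH0⟩ := master
  -- σ is an involution
  have hcomm : ∀ (x : AdjoinRoot p) (g : Polynomial F),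
      σ (Polynomial.aeval x g) = Polynomial.aeval (σ x) g := fun x g =>
    (Polynomial.aeval_algHom_apply (σ : AdjoinRoot p →ₐ[F] AdjoinRoot p) x g).symm
  have hσσroot : σ (σ (AdjoinRoot.root p)) = AdjoinRoot.root p := by
    have h1 := congrArg σ hσ
    rw [map_mul, map_one] at h1
    calc σ (σ (AdjoinRoot.root p))
        = σ (σ (AdjoinRoot.root p)) * (σ (AdjoinRoot.root p) * AdjoinRoot.root p) := by
          rw [hσ, mul_one]
      _ = (σ (σ (AdjoinRoot.root p)) * σ (AdjoinRoot.root p)) * AdjoinRoot.root p := by ring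
      _ = AdjoinRoot.root p := by rw [h1, one_mul]
  have hσσ : ∀ a : AdjoinRoot p, σ (σ a) = a := by
    intro a
    obtain ⟨f, rfl⟩ := AdjoinRoot.mk_surjective a
    rw [← AdjoinRoot.aeval_eq, hcomm, hcomm, hσσroot]
  have hswap : ∀ (a : AdjoinRoot p) (f : Polynomial F),
      h (AdjoinRoot.mk p f * σ a) = h (σ (AdjoinRoot.mk p f) * a) := by
    intro a f
    have : σ (σ (AdjoinRoot.mk p f) * a) = AdjoinRoot.mk p f * σ a := by
      rw [map_mul, hσσ]
    rw [← this, hhσ]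
  -- key bridge: the action of σ(e) is B-adjoint to the action of e
  have hTB : ∀ u v : V, B (T u) (T v) = B u v := hT
  have hAT : ∀ w : V, A w = T w := fun w => rfl
  have hρroot : ρ (AdjoinRoot.root p) = A := by
    rw [← AdjoinRoot.mk_X, hρmk, Polynomial.aeval_X]
  have hrootinv : ∀ w : V, T ((ρ (σ (AdjoinRoot.root p))) w) = w := by
    intro w
    have h1 : ρ (AdjoinRoot.root p) * ρ (σ (AdjoinRoot.root p)) = 1 := by
      rw [← map_mul, mul_comm, hσ, map_one]
    have h2 := congrArg (fun (g : Module.End F V) => g w) h1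
    simpa [Module.End.mul_apply, hρroot, hAT] using h2
  have hroot : ∀ w v : V,
      B ((ρ (σ (AdjoinRoot.root p))) w) v = B w ((ρ (AdjoinRoot.root p)) v) := by
    intro w v
    calc B ((ρ (σ (AdjoinRoot.root p))) w) v
        = B (T ((ρ (σ (AdjoinRoot.root p))) w)) (T v) := (hTB _ _).symm
      _ = B w (T v) := by rw [hrootinv]
      _ = B w ((ρ (AdjoinRoot.root p)) v) := by rw [hρroot]; rfl
  have bridge : ∀ (f : Polynomial F) (u v : V),
      B ((ρ (σ (AdjoinRoot.mk p f))) u) v = B u ((ρ (AdjoinRoot.mk p f)) v) := by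
    intro f
    induction f using Polynomial.induction_on with
    | C a =>
      intro u v
      have e1 : AdjoinRoot.mk p (Polynomial.C a) = algebraMap F (AdjoinRoot p) a := by
        rw [AdjoinRoot.algebraMap_eq]; rfl
      rw [e1, AlgEquiv.commutes]
      have h1 : ρ ((algebraMap F (AdjoinRoot p)) a) = algebraMap F (Module.End F V) a := by
        rw [← e1, hρmk, Polynomial.aeval_C]
      rw [h1]
      simp [Module.algebraMap_end_apply, map_smul]
    | add f g hf hg =>
      intro u v
      simp only [map_add, LinearMap.add_apply]
      rw [hf, hg]
    | monomial n a ih =>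
      intro u v
      have hrw : Polynomial.C a * Polynomial.X ^ (n + 1)
          = (Polynomial.C a * Polynomial.X ^ n) * Polynomial.X := by ring
      have e1 : AdjoinRoot.mk p (Polynomial.C a * Polynomial.X ^ (n + 1)) =
          AdjoinRoot.mk p (Polynomial.C a * Polynomial.X ^ n) * AdjoinRoot.root p := by
        rw [← AdjoinRoot.mk_X, ← map_mul, hrw]
      rw [e1]
      generalize hq : AdjoinRoot.mk p (Polynomial.C a * Polynomial.X ^ n) = q at ih ⊢
      rw [map_mul, map_mul, map_mul, Module.End.mul_apply, Module.End.mul_apply]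
      calc B ((ρ (σ q)) ((ρ (σ (AdjoinRoot.root p))) u)) v
          = B ((ρ (σ (AdjoinRoot.root p))) u) ((ρ q) v) := ih _ _
        _ = B u ((ρ (AdjoinRoot.root p)) ((ρ q) v)) := hroot _ _
        _ = B u ((ρ q) ((ρ (AdjoinRoot.root p)) v)) := by
            rw [← Module.End.mul_apply, ← Module.End.mul_apply, ← map_mul, ← map_mul, mul_comm]
  -- any H with the three properties satisfies the master identity
  have hprops : ∀ H : V → V → AdjoinRoot p,
      ((∀ u u' v : V, H (u + u') v = H u v + H u' v) ∧
       (∀ f : Polynomial F, ∀ u v : V,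
         H ((Polynomial.aeval A f) u) v = AdjoinRoot.mk p f * H u v) ∧
       (∀ u v : V, h (H u v) = B u v)) →
      ∀ (f : Polynomial F) (u v : V),
        h (AdjoinRoot.mk p f * H u v) = B ((Polynomial.aeval A f) u) v := by
    rintro H ⟨h1, h2, h3⟩ f u v
    rw [← h2, h3]
  -- the three properties for H0
  have p3 : ∀ u v : V, h (H0 u v) = B u v := by
    intro u v
    have := hH0 u v 1
    simpa using this
  have p1 : ∀ u u' v : V, H0 (u + u') v = H0 u v + H0 u' v := by
    intro u u' v
    apply hext
    intro f
    rw [mul_add, map_add, hH0, hH0, hH0, map_add, map_add, LinearMap.add_apply]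
  have p2 : ∀ g : Polynomial F, ∀ u v : V,
      H0 ((Polynomial.aeval A g) u) v = AdjoinRoot.mk p g * H0 u v := by
    intro g u v
    apply hext
    intro f
    rw [hH0, ← mul_assoc, ← map_mul, hH0, map_mul, Module.End.mul_apply]
  -- hermitian property for any H with the three properties
  have herm : ∀ H : V → V → AdjoinRoot p,
      ((∀ u u' v : V, H (u + u') v = H u v + H u' v) ∧
       (∀ f : Polynomial F, ∀ u v : V,
         H ((Polynomial.aeval A f) u) v = AdjoinRoot.mk p f * H u v) ∧
       (∀ u v : V, h (H u v) = B u v)) →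
      ∀ u v : V, H v u = σ (H u v) := by
    intro H hH u v
    have hk := hprops H hH
    apply hext
    intro f
    obtain ⟨g, hg⟩ := AdjoinRoot.mk_surjective (σ (AdjoinRoot.mk p f))
    rw [hk, hswap, ← hg, hk]
    have e2 : (Polynomial.aeval A g : Module.End F V) = ρ (AdjoinRoot.mk p g) := (hρmk g).symm
    rw [e2, hg, bridge, hρmk]
    simpa using hsymm.eq ((Polynomial.aeval A f) v) u
  refine ⟨⟨H0, ⟨p1, p2, p3⟩, ?_⟩, herm⟩
  intro H' hH'
  funext u v
  apply hext
  intro f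
  rw [hprops H' hH' f u v, hprops H0 ⟨p1, p2, p3⟩ f u v]
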